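/- For all integers r ≥ d ≥ 0, every d-non-blocking subset B ⊆ F_2^r satisfies (1 − 2^{d−r})·|B| ≤ Σ_{j=0}^{d} C(r,j) − 2^d. -/

import Mathlib

/-- A subset `C` of `F_2^r` is `d`-complete if through every point `v` there is a
`d`-flat contained in `C ∪ {v}`; i.e. there is a `d`-dimensional subspace `L`
with `v + (L \ {0}) ⊆ C`. -/
def KakeyaComplete (r d : ℕ) (C : Set (Fin r → ZMod 2)) : Prop :=
  ∀ v : Fin r → ZMod 2, ∃ L : Submodule (ZMod 2) (Fin r → ZMod 2),
    Module.finrank (ZMod 2) L = d ∧ ∀ x ∈ L, x ≠ 0 → v + x ∈ C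

/-- `gamma r d` is the smallest size of a `d`-complete subset of `F_2^r`. -/
noncomputable def gamma (r d : ℕ) : ℕ :=
  sInf {n | ∃ C : Finset (Fin r → ZMod 2), C.card = n ∧ KakeyaComplete r d ↑C}

/-- A subset `B` of `F_2^r` is `d`-non-blocking if for every `v` there is a
subspace `L` of dimension `r - d` (codimension `d`) with `(v + (L \ {0})) ∩ B = ∅`. -/
def KakeyaNonBlocking (r d : ℕ) (B : Set (Fin r → ZMod 2)) : Prop :=
  ∀ v : Fin r → ZMod 2, ∃ L : Submodule (ZMod 2) (Fin r → ZMod 2),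
    Module.finrank (ZMod 2) L = r - d ∧ ∀ x ∈ L, x ≠ 0 → v + x ∉ B

/-- `beta r d` is the largest size of a `d`-non-blocking subset of `F_2^r`. -/
noncomputable def beta (r d : ℕ) : ℕ :=
  sSup {n | ∃ B : Finset (Fin r → ZMod 2), B.card = n ∧ KakeyaNonBlocking r d ↑B}


open Finset Module

namespace KNBaux

abbrev V (r : ℕ) := Fin r → ZMod 2
abbrev F (r : ℕ) := V r → ZMod 2

variable {r : ℕ}

def mono (S : Finset (Fin r)) : F r := fun x => ∏ i ∈ S, x i

def Md (r n : ℕ) : Submodule (ZMod 2) (F r) :=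
  Submodule.span (ZMod 2) {f | ∃ S : Finset (Fin r), S.card ≤ n ∧ f = mono S}

lemma zmod2_cases : ∀ a : ZMod 2, a = 0 ∨ a = 1 := by decide

lemma zmod2_resolve : ∀ a : ZMod 2, a ≠ 0 → a = 1 := by decide

open scoped Classical in
noncomputable def ind (L : Submodule (ZMod 2) (V r)) (v : V r) : F r :=
  fun x => if x - v ∈ L then 1 else 0

lemma ind_apply_of_mem {L : Submodule (ZMod 2) (V r)} {v x : V r} (h : x - v ∈ L) :
    ind L v x = 1 := by simp [ind, h]

lemma ind_apply_of_not_mem {L : Submodule (ZMod 2) (V r)} {v x : V r} (h : x - v ∉ L) :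
    ind L v x = 0 := by simp [ind, h]

lemma mono_mul (S T : Finset (Fin r)) : mono S * mono T = mono (S ∪ T) := by
  funext x
  by_cases h : ∀ i ∈ S ∪ T, x i = 1
  · have h1 : mono S x = 1 := Finset.prod_eq_one fun i hi => h i (by simp [hi])
    have h2 : mono T x = 1 := Finset.prod_eq_one fun i hi => h i (by simp [hi])
    have h3 : mono (S ∪ T) x = 1 := Finset.prod_eq_one h
    simp only [Pi.mul_apply]; rw [h1, h2, h3]; norm_num
  · push_neg at h
    obtain ⟨i, hi, hxi⟩ := h
    have hx0 : x i = 0 := (zmod2_cases (x i)).resolve_right hxi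
    have hrhs : mono (S ∪ T) x = 0 := Finset.prod_eq_zero hi hx0
    simp only [Pi.mul_apply]; rw [hrhs]
    rcases Finset.mem_union.mp hi with hiS | hiT
    · rw [show mono S x = 0 from Finset.prod_eq_zero hiS hx0]; ring
    · rw [show mono T x = 0 from Finset.prod_eq_zero hiT hx0]; ring

lemma mul_mem_Md {a b : ℕ} {f g : F r} (hf : f ∈ Md r a) (hg : g ∈ Md r b) :
    f * g ∈ Md r (a + b) := by
  induction hf using Submodule.span_induction with
  | mem f hf =>
    obtain ⟨S, hS, rfl⟩ := hf
    induction hg using Submodule.span_induction with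
    | mem g hg =>
      obtain ⟨T, hT, rfl⟩ := hg
      rw [mono_mul]
      exact Submodule.subset_span ⟨S ∪ T, le_trans (Finset.card_union_le S T)
        (Nat.add_le_add hS hT), rfl⟩
    | zero => rw [mul_zero]; exact Submodule.zero_mem _
    | add g g' _ _ h1 h2 => rw [mul_add]; exact Submodule.add_mem _ h1 h2
    | smul c g _ h1 => rw [mul_smul_comm]; exact Submodule.smul_mem _ _ h1
  | zero => rw [zero_mul]; exact Submodule.zero_mem _
  | add f f' _ _ h1 h2 => rw [add_mul]; exact Submodule.add_mem _ h1 h2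
  | smul c f _ h1 => rw [smul_mul_assoc]; exact Submodule.smul_mem _ _ h1

lemma prod_mem_Md {ι : Type*} (s : Finset ι) (g : ι → F r)
    (hg : ∀ i ∈ s, g i ∈ Md r 1) : ∏ i ∈ s, g i ∈ Md r s.card := by
  induction s using Finset.cons_induction with
  | empty =>
    simp only [Finset.prod_empty, Finset.card_empty]
    exact Submodule.subset_span ⟨∅, by simp, by funext x; simp [mono]⟩
  | cons i s his ih =>
    rw [Finset.prod_cons, Finset.card_cons]
    have := mul_mem_Md (hg i (Finset.mem_cons_self i s))
      (ih fun j hj => hg j (Finset.mem_cons_of_mem hj))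
    rwa [add_comm] at this

lemma affine_mem (φ : V r →ₗ[ZMod 2] ZMod 2) (c : ZMod 2) :
    (fun x => c + φ x) ∈ Md r 1 := by
  classical
  have key : (fun x : V r => c + φ x) =
      c • mono (∅ : Finset (Fin r)) +
        ∑ j : Fin r, (φ fun k => if j = k then 1 else 0) • mono {j} := by
    funext x
    simp only [Pi.add_apply, Pi.smul_apply, Finset.sum_apply, smul_eq_mul, mono,
      Finset.prod_empty, Finset.prod_singleton, mul_one]
    rw [LinearMap.pi_apply_eq_sum_univ φ x]
    congr 1
    exact Finset.sum_congr rfl fun j _ => by rw [smul_eq_mul, mul_comm]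
  rw [key]
  refine Submodule.add_mem _ (Submodule.smul_mem _ _ (Submodule.subset_span ⟨∅, by simp, rfl⟩)) ?_
  exact Submodule.sum_mem _ fun j _ =>
    Submodule.smul_mem _ _ (Submodule.subset_span ⟨{j}, by simp, rfl⟩)

lemma sub_eq_add (x v : V r) : x - v = x + v := by
  funext i
  have : ∀ a b : ZMod 2, a - b = a + b := by decide
  exact this _ _

lemma indicator_mem (d : ℕ) (hd : d ≤ r) (L : Submodule (ZMod 2) (V r))
    (hL : finrank (ZMod 2) L = r - d) (v : V r) :
    ind L v ∈ Md r d := by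
  classical
  have hV : finrank (ZMod 2) (V r) = r := by
    rw [finrank_pi]; exact Fintype.card_fin r
  have hQ : finrank (ZMod 2) (V r ⧸ L) = d := by
    have := Submodule.finrank_quotient_add_finrank L
    rw [hL, hV] at this; omega
  obtain ⟨e⟩ : Nonempty ((V r ⧸ L) ≃ₗ[ZMod 2] (Fin d → ZMod 2)) :=
    FiniteDimensional.nonempty_linearEquiv_of_finrank_eq
      (by rw [hQ, finrank_pi, Fintype.card_fin])
  set f : Fin d → (V r →ₗ[ZMod 2] ZMod 2) :=
    fun i => (LinearMap.proj i).comp (e.toLinearMap.comp L.mkQ) with hf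
  have mem_iff : ∀ x : V r, x ∈ L ↔ ∀ i, f i x = 0 := by
    intro x
    constructor
    · intro hx i
      simp only [hf, LinearMap.comp_apply, LinearEquiv.coe_coe, Submodule.mkQ_apply,
        LinearMap.proj_apply]
      rw [(Submodule.Quotient.mk_eq_zero L).mpr hx]
      simp
    · intro hx
      have h1 : e (Submodule.Quotient.mk x) = 0 := funext fun i => hx i
      have h0 : (Submodule.Quotient.mk x : V r ⧸ L) = 0 := by
        apply e.injective; simpa using h1
      exact (Submodule.Quotient.mk_eq_zero L).mp h0
  have key : ind L v = ∏ i : Fin d, (fun x : V r => (1 + f i v) + f i x) := by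
    funext x
    rw [Finset.prod_apply]
    have hfac : ∀ i : Fin d, (1 + f i v) + f i x = 1 + f i (x - v) := by
      intro i
      rw [sub_eq_add, map_add]; ring
    by_cases hx : x - v ∈ L
    · rw [ind_apply_of_mem hx]
      refine (Finset.prod_eq_one fun i _ => ?_).symm
      rw [hfac i, (mem_iff _).mp hx i, add_zero]
    · rw [ind_apply_of_not_mem hx]
      obtain ⟨i, hi⟩ : ∃ i, f i (x - v) ≠ 0 := by
        by_contra hcon
        push_neg at hcon
        exact hx ((mem_iff _).mpr hcon)
      refine (Finset.prod_eq_zero (Finset.mem_univ i) ?_).symm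
      rw [hfac i, zmod2_resolve _ hi]
      decide
  rw [key]
  have := prod_mem_Md (Finset.univ : Finset (Fin d))
    (fun i => (fun x : V r => (1 + f i v) + f i x)) (fun i _ => affine_mem (f i) _)
  rwa [Finset.card_univ, Fintype.card_fin] at this

lemma card_small_sets (r d : ℕ) :
    (Finset.univ.filter (fun S : Finset (Fin r) => S.card ≤ d)).card
      = ∑ j ∈ Finset.range (d + 1), r.choose j := by
  classical
  have hset : (Finset.univ.filter (fun S : Finset (Fin r) => S.card ≤ d))
      = (Finset.range (d + 1)).biUnion (fun j => Finset.univ.powersetCard j) := by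
    ext S
    simp only [Finset.mem_filter, Finset.mem_univ, true_and, Finset.mem_biUnion,
      Finset.mem_range, Finset.mem_powersetCard, Nat.lt_succ_iff]
    constructor
    · intro hS; exact ⟨S.card, hS, Finset.subset_univ S, rfl⟩
    · rintro ⟨j, hj, -, rfl⟩; exact hj
  rw [hset, Finset.card_biUnion]
  · exact Finset.sum_congr rfl fun j _ => by
      rw [Finset.card_powersetCard, Finset.card_univ, Fintype.card_fin]
  · intro i _ j _ hij
    simp only [Function.onFun]
    rw [Finset.disjoint_left]
    intro S hS hS'
    rw [Finset.mem_powersetCard] at hS hS'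
    exact hij (hS.2.symm.trans hS'.2)

lemma finrank_Md_le (r d : ℕ) :
    finrank (ZMod 2) (Md r d) ≤ ∑ j ∈ Finset.range (d + 1), r.choose j := by
  classical
  have hset : {f | ∃ S : Finset (Fin r), S.card ≤ d ∧ f = mono S}
      = ↑((Finset.univ.filter (fun S : Finset (Fin r) => S.card ≤ d)).image mono) := by
    ext f
    simp only [Set.mem_setOf_eq, Finset.coe_image, Set.mem_image, Finset.mem_coe,
      Finset.mem_filter, Finset.mem_univ, true_and]
    constructor
    · rintro ⟨S, hS, rfl⟩; exact ⟨S, hS, rfl⟩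
    · rintro ⟨S, hS, rfl⟩; exact ⟨S, hS, rfl⟩
  rw [Md, hset]
  refine le_trans (finrank_span_le_card _) ?_
  rw [Finset.toFinset_coe]
  exact le_trans (Finset.card_image_le) (le_of_eq (card_small_sets r d))

lemma supp_span {s : Set (F r)} {g : F r} (hg : g ∈ Submodule.span (ZMod 2) s)
    (x : V r) (hx : g x ≠ 0) : ∃ f ∈ s, f x ≠ 0 := by
  by_contra hcon
  push_neg at hcon
  have hle : s ⊆ (LinearMap.ker (LinearMap.proj x : F r →ₗ[ZMod 2] ZMod 2) : Set (F r)) :=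
    fun f hf => hcon f hf
  exact hx ((Submodule.span_le.mpr hle) hg)

theorem main (r d : ℕ) (h : d ≤ r) (B : Finset (V r))
    (hB : ∀ v : V r, ∃ L : Submodule (ZMod 2) (V r),
      finrank (ZMod 2) L = r - d ∧ ∀ x ∈ L, x ≠ 0 → v + x ∉ (B : Set (V r))) :
    (1 - (2 : ℝ) ^ ((d : ℝ) - (r : ℝ))) * (B.card : ℝ) ≤
      (∑ j ∈ Finset.range (d + 1), (r.choose j : ℝ)) - 2 ^ d := by
  classical
  choose L hL1 hL2 using hB
  set P : V r → F r := fun v => ind (L v) v with hP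
  have hPmem : ∀ v, P v ∈ Md r d := fun v => indicator_mem d h (L v) (hL1 v) v
  have hPvv : ∀ v, P v v = 1 := fun v => ind_apply_of_mem (by rw [sub_self]; exact (L v).zero_mem)
  have hPzero : ∀ v b, b ∈ B → b ≠ v → P v b = 0 := by
    intro v b hb hbv
    apply ind_apply_of_not_mem
    intro hmem
    refine hL2 v (b - v) hmem (sub_ne_zero_of_ne hbv) ?_
    rw [show v + (b - v) = b by abel]
    exact hb
  have hiff : ∀ v x, P v x ≠ 0 ↔ x - v ∈ L v := by
    intro v x
    by_cases hm : x - v ∈ L v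
    · simp only [hP]; rw [ind_apply_of_mem hm]; simp [hm]
    · simp only [hP]; rw [ind_apply_of_not_mem hm]; simp [hm]
  have hPsupp : ∀ v, (Finset.univ.filter fun x => P v x ≠ 0).card = 2 ^ (r - d) := by
    intro v
    have e : ↥(Finset.univ.filter fun x => P v x ≠ 0) ≃ ↥(L v) :=
      { toFun := fun x => ⟨x.1 - v, (hiff v x.1).mp (Finset.mem_filter.mp x.2).2⟩
        invFun := fun y => ⟨y.1 + v, Finset.mem_filter.mpr ⟨Finset.mem_univ _,
          (hiff v _).mpr (by rw [add_sub_cancel_right]; exact y.2)⟩⟩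
        left_inv := fun x => by ext; simp
        right_inv := fun y => by ext; simp }
    rw [← Fintype.card_coe, Fintype.card_congr e, card_eq_pow_finrank (K := ZMod 2),
      hL1 v]
    norm_num
  -- the span of "outside" indicator functions
  set SC : Set (F r) := P '' {v | v ∉ B} with hSC
  obtain ⟨b, hbsub, hbspan, hbind⟩ := exists_linearIndependent (ZMod 2) SC
  haveI : Fintype ↥b := (Set.toFinite b).fintype
  set t : ℕ := b.toFinset.card with ht
  have hfr : finrank (ZMod 2) (Submodule.span (ZMod 2) SC) = t := by
    rw [← hbspan]
    exact finrank_span_set_eq_card hbind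
  -- covering the complement
  have hcover : ∀ v : V r, v ∉ B → ∃ g ∈ b, g v ≠ 0 := by
    intro v hv
    have hmem : P v ∈ Submodule.span (ZMod 2) b := by
      rw [hbspan]
      exact Submodule.subset_span ⟨v, hv, rfl⟩
    have := hPvv v
    exact supp_span hmem v (by rw [this]; norm_num)
  have hcount : (Bᶜ : Finset (V r)).card ≤ t * 2 ^ (r - d) := by
    have hsub : (Bᶜ : Finset (V r)) ⊆
        b.toFinset.biUnion (fun g => Finset.univ.filter fun x => g x ≠ 0) := by
      intro v hv
      obtain ⟨g, hg, hgv⟩ := hcover v (Finset.mem_compl.mp hv)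
      exact Finset.mem_biUnion.mpr ⟨g, Set.mem_toFinset.mpr hg,
        Finset.mem_filter.mpr ⟨Finset.mem_univ _, hgv⟩⟩
    refine le_trans (Finset.card_le_card hsub) ?_
    refine le_trans (Finset.card_biUnion_le) ?_
    have hconst : ∀ g ∈ b.toFinset, (Finset.univ.filter fun x => g x ≠ 0).card = 2 ^ (r - d) := by
      intro g hg
      obtain ⟨w, hw, rfl⟩ := hbsub (Set.mem_toFinset.mp hg)
      exact hPsupp w
    rw [Finset.sum_congr rfl hconst, Finset.sum_const, smul_eq_mul]
  -- evaluation map onto functions on B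
  set ev : F r →ₗ[ZMod 2] (↥B → ZMod 2) :=
    LinearMap.funLeft (ZMod 2) (ZMod 2) (Subtype.val : ↥B → V r) with hev
  set evM : Md r d →ₗ[ZMod 2] (↥B → ZMod 2) := ev.comp (Md r d).subtype with hevM
  have hsurj : LinearMap.range evM = ⊤ := by
    rw [eq_top_iff]
    rintro u -
    rw [pi_eq_sum_univ u]
    refine Submodule.sum_mem _ fun i _ => Submodule.smul_mem _ _ ?_
    refine ⟨⟨P ↑i, hPmem ↑i⟩, ?_⟩
    funext j
    simp only [hevM, hev, LinearMap.comp_apply, Submodule.coe_subtype,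
      LinearMap.funLeft_apply]
    by_cases hji : i = j
    · subst hji; rw [if_pos rfl]; exact hPvv ↑i
    · rw [if_neg hji]
      exact hPzero ↑i ↑j j.2 (fun hc => hji (Subtype.ext hc).symm)
  have hrange : finrank (ZMod 2) (LinearMap.range evM) = B.card := by
    rw [hsurj, finrank_top, finrank_pi, Fintype.card_coe]
  have hrn := LinearMap.finrank_range_add_finrank_ker evM
  have hWle : Submodule.span (ZMod 2) SC ≤
      Submodule.map (Md r d).subtype (LinearMap.ker evM) := by
    rw [Submodule.span_le]
    rintro f ⟨w, hw, rfl⟩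
    refine Submodule.mem_map.mpr ⟨⟨P w, hPmem w⟩, ?_, rfl⟩
    rw [LinearMap.mem_ker]
    funext j
    simp only [hevM, hev, LinearMap.comp_apply, Submodule.coe_subtype,
      LinearMap.funLeft_apply, Pi.zero_apply]
    exact hPzero w ↑j j.2 (fun hc => hw (hc ▸ j.2))
  have hWker : t ≤ finrank (ZMod 2) (LinearMap.ker evM) := by
    rw [← hfr]
    exact le_trans (Submodule.finrank_mono hWle)
      (le_of_eq (Submodule.finrank_map_subtype_eq _ _))
  set D : ℕ := ∑ j ∈ Finset.range (d + 1), r.choose j with hD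
  have hMle : finrank (ZMod 2) (Md r d) ≤ D := finrank_Md_le r d
  have N1 : t + B.card ≤ D := by
    calc t + B.card ≤ finrank (ZMod 2) (LinearMap.ker evM) + B.card :=
          Nat.add_le_add_right hWker _
      _ = finrank (ZMod 2) (Md r d) := by rw [add_comm, ← hrange]; exact hrn
      _ ≤ D := hMle
  have hcV : Fintype.card (V r) = 2 ^ r := by
    rw [Fintype.card_fun, ZMod.card, Fintype.card_fin]
  have hBle : B.card ≤ 2 ^ r := by
    have := Finset.card_le_univ B
    rwa [hcV] at this
  have N2 : 2 ^ r ≤ B.card + t * 2 ^ (r - d) := by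
    have hcompl : (Bᶜ : Finset (V r)).card = 2 ^ r - B.card := by
      rw [Finset.card_compl, hcV]
    calc 2 ^ r = B.card + (2 ^ r - B.card) := (Nat.add_sub_cancel' hBle).symm
      _ ≤ B.card + t * 2 ^ (r - d) := Nat.add_le_add_left (hcompl ▸ hcount) _
  -- real arithmetic
  have hpow : (2 : ℝ) ^ ((d : ℝ) - (r : ℝ)) = 2 ^ d / 2 ^ r := by
    rw [Real.rpow_sub (by norm_num), Real.rpow_natCast, Real.rpow_natCast]
  have hsplit : (2 : ℝ) ^ (r - d) * 2 ^ d = 2 ^ r := by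
    rw [← pow_add]; congr 1; omega
  have hN1 : (t : ℝ) + (B.card : ℝ) ≤ (D : ℝ) := by exact_mod_cast N1
  have hN2 : (2 : ℝ) ^ r ≤ (B.card : ℝ) + (t : ℝ) * 2 ^ (r - d) := by exact_mod_cast N2
  have hDr : (D : ℝ) = ∑ j ∈ Finset.range (d + 1), (r.choose j : ℝ) := by
    rw [hD]; push_cast; ring
  rw [hpow, ← hDr]
  have h2r : (0 : ℝ) < 2 ^ r := by positivity
  have h2d : (0 : ℝ) < 2 ^ d := by positivity
  have key2 : (2 : ℝ) ^ d * 2 ^ r ≤ 2 ^ d * (B.card : ℝ) + (t : ℝ) * 2 ^ r := by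
    calc (2 : ℝ) ^ d * 2 ^ r ≤ 2 ^ d * ((B.card : ℝ) + (t : ℝ) * 2 ^ (r - d)) :=
          mul_le_mul_of_nonneg_left hN2 h2d.le
      _ = 2 ^ d * (B.card : ℝ) + (t : ℝ) * (2 ^ (r - d) * 2 ^ d) := by ring
      _ = 2 ^ d * (B.card : ℝ) + (t : ℝ) * 2 ^ r := by rw [hsplit]
  have h5 : (2 : ℝ) ^ d ≤ 2 ^ d / 2 ^ r * (B.card : ℝ) + (t : ℝ) := by
    have hdiv : (2 : ℝ) ^ d - (t : ℝ) ≤ 2 ^ d * (B.card : ℝ) / 2 ^ r := by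
      rw [le_div_iff₀ h2r]
      have expand2 : ((2 : ℝ) ^ d - (t : ℝ)) * 2 ^ r = 2 ^ d * 2 ^ r - (t : ℝ) * 2 ^ r := by
        ring
      rw [expand2]
      linarith [key2]
    have heq : 2 ^ d / 2 ^ r * ((B.card : ℝ)) = 2 ^ d * (B.card : ℝ) / 2 ^ r := by ring
    linarith [hdiv]
  have expand : (1 - 2 ^ d / 2 ^ r) * ((B.card : ℝ)) =
      (B.card : ℝ) - 2 ^ d / 2 ^ r * (B.card : ℝ) := by ring
  linarith [h5, hN1]

end KNBaux

theorem nonblocking_upper_bound_strong (r d : ℕ) (h : d ≤ r)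
    (B : Finset (Fin r → ZMod 2)) (hB : KakeyaNonBlocking r d ↑B) :
    (1 - (2 : ℝ) ^ ((d : ℝ) - (r : ℝ))) * (B.card : ℝ) ≤
      (∑ j ∈ Finset.range (d + 1), (r.choose j : ℝ)) - 2 ^ d := KNBaux.main r d h B hB
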